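/- Let a finite rooted tree be given, with ℓ a leaf, and let w, w̃ : V⁰ → ℝ satisfy 0 ≤ w_u ≤ w̃_u and w̃_u > 0 for all u ∈ V⁰. Let x, δ ∈ K(T) with δ_u > 0 for all u, let λ : V → ℝ satisfy λ_u ≥ 0 for all u and λ_u = 0 for every leaf u, let s ≥ 0, and let x'_u for u ∈ V⁰∖{c_r} be given by the mirror-descent dynamic. Then for every real s_w with 0 ≤ s_w ≤ s, the instantaneous cost satisfies s_w·x_ℓ + Σ_{u ∈ V⁰∖{c_r}} w_u·|x'_u| ≤ 3·s·x_ℓ + 2·Σ_{u ∈ V⁰} λ_u·(x_u + δ_u). -/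
import Mathlib


open Finset Real

/-- Lemma: bound on the algorithm's instantaneous cost in a continuous step.
A finite rooted tree is given by a vertex set `V`, a root `r`, a parent map `p` and a depth
map `dep` with `dep r = 0` and `dep u = dep (p u) + 1` for `u ≠ r`.  `V⁰ = V \ {r}`,
a leaf is a non-root vertex with no children, and `cr` is the unique child of the root.
Membership of `x : V → ℝ` (with the convention `x r = 1`) in the polytope `K(T)` means
nonnegativity on `V⁰` together with flow conservation at every internal (non-leaf) vertex. -/
theorem stmt0
    {V : Type*} [Fintype V] [DecidableEq V]
    (r : V) (p : V → V) (dep : V → ℕ)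
    (hdep_r : dep r = 0)
    (hdep : ∀ u, u ≠ r → dep u = dep (p u) + 1)
    (cr : V) (hcr : ∀ v, (v ≠ r ∧ p v = r) ↔ v = cr)
    -- ℓ is a leaf
    (ℓ : V) (hℓ : ℓ ≠ r ∧ ∀ v, v ≠ r → p v ≠ ℓ)
    -- weights: 0 ≤ w ≤ w̃ and w̃ > 0 on V⁰
    (w wt : V → ℝ)
    (hw : ∀ u, u ≠ r → 0 ≤ w u ∧ w u ≤ wt u)
    (hwt : ∀ u, u ≠ r → 0 < wt u)
    -- x, δ ∈ K(T)
    (x δ : V → ℝ)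
    (hx : x r = 1 ∧ (∀ u, u ≠ r → 0 ≤ x u) ∧
      ∀ u, ¬(u ≠ r ∧ ∀ v, v ≠ r → p v ≠ u) →
        ∑ v ∈ univ.filter (fun v => v ≠ r ∧ p v = u), x v = x u)
    (hδ : δ r = 1 ∧ (∀ u, u ≠ r → 0 ≤ δ u) ∧
      ∀ u, ¬(u ≠ r ∧ ∀ v, v ≠ r → p v ≠ u) →
        ∑ v ∈ univ.filter (fun v => v ≠ r ∧ p v = u), δ v = δ u)
    (hδpos : ∀ u, u ≠ r → 0 < δ u)
    -- Lagrange multipliers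
    (lam : V → ℝ)
    (hlam_nonneg : ∀ u, 0 ≤ lam u)
    (hlam_leaf : ∀ u, (u ≠ r ∧ ∀ v, v ≠ r → p v ≠ u) → lam u = 0)
    -- rate and mirror-descent dynamic
    (s : ℝ) (hs : 0 ≤ s)
    (x' : V → ℝ)
    (hx' : ∀ u, u ≠ r → u ≠ cr →
      x' u = (-2 * x u * s * (if u = ℓ then 1 else 0)
              + (x u + δ u) * (lam (p u) - lam u)) / wt u)
    -- actual weight growth rate
    (sw : ℝ) (hsw0 : 0 ≤ sw) (hsws : sw ≤ s) :
    sw * x ℓ + ∑ u ∈ univ.filter (fun u => u ≠ r ∧ u ≠ cr), w u * |x' u|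
      ≤ 3 * s * x ℓ + 2 * ∑ u ∈ univ.filter (fun u => u ≠ r), lam u * (x u + δ u) := by

  classical
  have hxl0 : 0 ≤ x ℓ := hx.2.1 ℓ hℓ.1
  set S := univ.filter (fun u : V => u ≠ r ∧ u ≠ cr) with hS
  set T := univ.filter (fun u : V => u ≠ r) with hT
  -- pointwise bound
  have key : ∀ u ∈ S, w u * |x' u| ≤
      2 * s * x u * (if u = ℓ then 1 else 0) + lam (p u) * (x u + δ u) + lam u * (x u + δ u) := by
    intro u hu
    simp only [hS, mem_filter, mem_univ, true_and] at hu
    obtain ⟨hur, hucr⟩ := hu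
    have hwtu := hwt u hur
    have hwu := hw u hur
    have hxu := hx.2.1 u hur
    have hδu := (hδpos u hur).le
    have hxδ : 0 ≤ x u + δ u := by linarith
    rw [hx' u hur hucr]
    set A := -2 * x u * s * (if u = ℓ then 1 else 0) + (x u + δ u) * (lam (p u) - lam u) with hA
    have h1 : w u * |A / wt u| ≤ |A| := by
      rw [abs_div, abs_of_pos hwtu]
      calc w u * (|A| / wt u) = (w u / wt u) * |A| := by ring
        _ ≤ 1 * |A| :=
          mul_le_mul_of_nonneg_right ((div_le_one hwtu).2 hwu.2) (abs_nonneg _)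
        _ = |A| := one_mul _
    have h2 : |A| ≤ 2 * s * x u * (if u = ℓ then 1 else 0)
        + lam (p u) * (x u + δ u) + lam u * (x u + δ u) := by
      have habs : |A| ≤ |-2 * x u * s * (if u = ℓ then 1 else 0)|
          + |(x u + δ u) * (lam (p u) - lam u)| := abs_add_le _ _
      have e1 : |-2 * x u * s * (if u = ℓ then 1 else 0)|
          = 2 * s * x u * (if u = ℓ then 1 else 0) := by
        by_cases h : u = ℓ
        · subst h
          rw [if_pos rfl, show -2 * x u * s * 1 = -(2 * x u * s) by ring, abs_neg,
            abs_of_nonneg (by positivity)]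
          ring
        · simp [h]
      have e2 : |(x u + δ u) * (lam (p u) - lam u)|
          ≤ lam (p u) * (x u + δ u) + lam u * (x u + δ u) := by
        rw [abs_mul, abs_of_nonneg hxδ]
        have : |lam (p u) - lam u| ≤ lam (p u) + lam u := by
          have := abs_sub (lam (p u)) (lam u)
          rw [abs_of_nonneg (hlam_nonneg (p u)), abs_of_nonneg (hlam_nonneg u)] at this
          exact this
        nlinarith [hlam_nonneg (p u), hlam_nonneg u]
      calc |A| ≤ _ := habs
        _ ≤ _ := by rw [e1]; nlinarith [e2]
    exact h1.trans h2
  have hsum := Finset.sum_le_sum key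
  rw [Finset.sum_add_distrib, Finset.sum_add_distrib] at hsum
  -- the indicator sum
  have hind : ∑ u ∈ S, 2 * s * x u * (if u = ℓ then 1 else 0) ≤ 2 * s * x ℓ := by
    have : ∑ u ∈ S, 2 * s * x u * (if u = ℓ then 1 else 0)
        = ∑ u ∈ S, (if u = ℓ then 2 * s * x u else 0) := by
      apply Finset.sum_congr rfl; intro u _; by_cases h : u = ℓ <;> simp [h]
    rw [this, Finset.sum_ite_eq' S ℓ (fun u => 2 * s * x u)]
    by_cases h : ℓ ∈ S
    · simp [h]
    · simp [h]; positivity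
  -- the parent sum
  have hparent : ∑ u ∈ S, lam (p u) * (x u + δ u) = ∑ v ∈ T, lam v * (x v + δ v) := by
    have hmaps : ∀ u ∈ S, p u ∈ T := by
      intro u hu
      simp only [hS, hT, mem_filter, mem_univ, true_and] at hu ⊢
      intro hpu
      exact hu.2 ((hcr u).1 ⟨hu.1, hpu⟩)
    rw [← Finset.sum_fiberwise_of_maps_to hmaps (fun u => lam (p u) * (x u + δ u))]
    apply Finset.sum_congr rfl
    intro v hv
    simp only [hT, mem_filter, mem_univ, true_and] at hv
    have hfib : S.filter (fun u => p u = v) = univ.filter (fun u => u ≠ r ∧ p u = v) := by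
      ext u
      simp only [hS, mem_filter, mem_univ, true_and]
      constructor
      · rintro ⟨⟨h1, _⟩, h3⟩; exact ⟨h1, h3⟩
      · rintro ⟨h1, h3⟩
        refine ⟨⟨h1, fun hu => ?_⟩, h3⟩
        have hpcr : p cr = r := ((hcr cr).2 rfl).2
        subst hu
        exact hv (by rw [← h3, hpcr])
    have hcongr : ∑ u ∈ S.filter (fun u => p u = v), lam (p u) * (x u + δ u)
        = lam v * ∑ u ∈ univ.filter (fun u => u ≠ r ∧ p u = v), (x u + δ u) := by
      rw [hfib, Finset.mul_sum]
      apply Finset.sum_congr rfl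
      intro u hu
      simp only [mem_filter, mem_univ, true_and] at hu
      rw [hu.2]
    rw [hcongr]
    by_cases hleaf : v ≠ r ∧ ∀ u, u ≠ r → p u ≠ v
    · rw [hlam_leaf v hleaf]; ring
    · rw [Finset.sum_add_distrib, hx.2.2 v hleaf, hδ.2.2 v hleaf]
  -- the own-lambda sum
  have hlast : ∑ u ∈ S, lam u * (x u + δ u) ≤ ∑ u ∈ T, lam u * (x u + δ u) := by
    apply Finset.sum_le_sum_of_subset_of_nonneg
    · intro u hu
      simp only [hS, hT, mem_filter, mem_univ, true_and] at hu ⊢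
      exact hu.1
    · intro u hu _
      simp only [hT, mem_filter, mem_univ, true_and] at hu
      have := hx.2.1 u hu
      have := (hδpos u hu).le
      have := hlam_nonneg u
      positivity
  have hswl : sw * x ℓ ≤ s * x ℓ := mul_le_mul_of_nonneg_right hsws hxl0
  rw [hparent] at hsum
  linarith
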